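/- Let R be a ring. If a Gorenstein injective R-module M has finite injective dimension, then M is injective. -/

import Mathlib

open CategoryTheory Opposite

universe u

variable {R : Type u} [Ring R]

/-- A cochain complex of modules is totally acyclic (for injectives) if all its terms are
injective, it is exact, and applying `Hom(J, -)` gives an exact complex for every
injective module `J`. -/
def IsInjTotallyAcyclic {R : Type u} [Ring R] (I : CochainComplex (ModuleCat.{u} R) ℤ) : Prop :=
  (∀ i, Injective (I.X i)) ∧ (∀ i, I.ExactAt i) ∧
    (∀ J : ModuleCat.{u} R, Injective J → ∀ i,
      ((((preadditiveCoyoneda.obj (op J)).mapHomologicalComplex _).obj I).ExactAt i))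

/-- A module is Gorenstein injective if it is a kernel (cosyzygy) in a totally acyclic
complex of injectives. -/
def IsGorensteinInjective {R : Type u} [Ring R] (M : ModuleCat.{u} R) : Prop :=
  ∃ I : CochainComplex (ModuleCat.{u} R) ℤ, IsInjTotallyAcyclic I ∧ Nonempty (M ≅ I.cycles 0)

/-- `M` has injective dimension at most `n`: it admits an injective coresolution
vanishing in degrees `> n`. -/
def HasInjDimLE (M : ModuleCat.{u} R) (n : ℕ) : Prop :=
  ∃ (I : CochainComplex (ModuleCat.{u} R) ℕ)
    (ι : (CochainComplex.single₀ (ModuleCat.{u} R)).obj M ⟶ I),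
      QuasiIso ι ∧ (∀ i, Injective (I.X i)) ∧ (∀ i, n < i → Limits.IsZero (I.X i))

open Limits HomologicalComplex

section Aux

/-- `L` admits a chain of short exact sequences of length `n` with injective middle terms,
ending at an injective module. -/
def ChainInj : ℕ → ModuleCat.{u} R → Prop
  | 0, L => Injective L
  | n+1, L => ∃ S : ShortComplex (ModuleCat.{u} R),
      S.Exact ∧ Mono S.f ∧ Epi S.g ∧ Nonempty (L ≅ S.X₁) ∧ Injective S.X₂ ∧ ChainInj n S.X₃

lemma ChainInj.of_iso {n : ℕ} {L L' : ModuleCat.{u} R} (h : ChainInj n L) (e : L ≅ L') :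
    ChainInj n L' := by
  cases n with
  | zero => exact Injective.of_iso e h
  | succ n =>
    obtain ⟨S, h1, h2, h3, ⟨e'⟩, h4, h5⟩ := h
    exact ⟨S, h1, h2, h3, ⟨e.symm ≪≫ e'⟩, h4, h5⟩

/-- `toCycles` is epi at an exactness point. -/
lemma epi_toCycles_of_exactAt {C : Type*} [Category C] [Abelian C] {ι : Type*}
    {c : ComplexShape ι} (K : HomologicalComplex C c) {i j : ι} (hij : c.prev j = i)
    (h : K.ExactAt j) : Epi (K.toCycles i j) := by
  subst hij
  rw [exactAt_iff] at h
  have heq : K.toCycles (c.prev j) j = (K.sc j).toCycles := by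
    refine (cancel_mono (K.iCycles j)).1 ?_
    rw [toCycles_i]
    exact ((K.sc j).toCycles_i).symm
  rw [heq]
  exact h.epi_toCycles

/-- the short complex `cycles m ⟶ X m ⟶ cycles (m+1)` is exact. -/
lemma cycles_shortComplex_exact (K : CochainComplex (ModuleCat.{u} R) ℕ) (m : ℕ) :
    (ShortComplex.mk (K.iCycles m) (K.toCycles m (m+1))
      (by rw [← cancel_mono (K.iCycles (m+1)), Category.assoc, toCycles_i, zero_comp,
              iCycles_d])).Exact := by
  apply ShortComplex.exact_of_f_is_kernel
  exact KernelFork.IsLimit.ofι' _ _ (fun {A} k hk => by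
    have hk' : k ≫ K.d m (m+1) = 0 := by
      simpa using hk =≫ K.iCycles (m+1)
    exact ⟨K.liftCycles k (m+1) (by simp) hk', by simp⟩)

lemma chainInj_of_complex (n : ℕ) :
    ∀ (m : ℕ) (K : CochainComplex (ModuleCat.{u} R) ℕ),
      (∀ i, Injective (K.X i)) → (∀ j, m < j → K.ExactAt j) →
      (∀ i, m + n < i → IsZero (K.X i)) → ChainInj n (K.cycles m) := by
  induction n with
  | zero =>
    intro m K hinj _ hzero
    have hd : K.d m (m+1) = 0 := (hzero (m+1) (by omega)).eq_of_tgt _ _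
    exact Injective.of_iso (K.iCyclesIso m (m+1) (by simp) hd).symm (hinj m)
  | succ n ih =>
    intro m K hinj hex hzero
    refine ⟨ShortComplex.mk (K.iCycles m) (K.toCycles m (m+1)) _, cycles_shortComplex_exact K m,
      inferInstance, ?_, ⟨Iso.refl _⟩, hinj m, ?_⟩
    · exact epi_toCycles_of_exactAt K (by simp) (hex (m+1) (by omega))
    · exact ih (m+1) K hinj (fun j hj => hex j (by omega)) (fun i hi => hzero i (by omega))

lemma chainInj_of_hasInjDimLE {M : ModuleCat.{u} R} {n : ℕ} (h : HasInjDimLE M n) :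
    ChainInj n M := by
  obtain ⟨K, ι, hq, hinj, hzero⟩ := h
  have hex : ∀ j, 0 < j → K.ExactAt j := by
    intro j hj
    rw [exactAt_iff_isZero_homology]
    have : IsZero (((CochainComplex.single₀ (ModuleCat.{u} R)).obj M).homology j) :=
      isZero_single_obj_homology _ _ _ _ (by omega)
    have h2 : IsIso (homologyMap ι j) := (quasiIsoAt_iff_isIso_homologyMap ι j).1 (hq.1 j)
    exact this.of_iso (asIso (homologyMap ι j)).symm
  have e : M ≅ K.cycles 0 := by
    refine (singleObjHomologySelfIso _ 0 M).symm ≪≫ asIso (homologyMap ι 0) ≪≫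
      (K.isoHomologyπ 0 0 (by simp) (K.shape 0 0 (by simp))).symm
  exact (chainInj_of_complex n 0 K hinj hex (fun i hi => hzero i (by omega))).of_iso e.symm

/-- Key lifting lemma from total acyclicity: maps from injectives into cycles lift. -/
lemma lift_of_injective {I : CochainComplex (ModuleCat.{u} R) ℤ}
    (hI : IsInjTotallyAcyclic I) {J : ModuleCat.{u} R} (hJ : Injective J)
    (j k : ℤ) (hjk : j + 1 = k) (f : J ⟶ I.cycles k) :
    ∃ w : J ⟶ I.X j, w ≫ I.toCycles j k = f := by
  subst hjk
  have hA := hI.2.2 J hJ (j+1)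
  rw [exactAt_iff' _ j (j+1) (j+1+1) (by simp [CochainComplex.prev]) (by simp)] at hA
  rw [ShortComplex.ab_exact_iff] at hA
  obtain ⟨x₁, hx₁⟩ := hA (f ≫ I.iCycles (j+1)) (by
    show (f ≫ I.iCycles (j+1)) ≫ I.d (j+1) (j+1+1) = 0
    rw [Category.assoc, iCycles_d, comp_zero])
  refine ⟨(show J ⟶ I.X j from x₁), ?_⟩
  rw [← cancel_mono (I.iCycles (j+1)), Category.assoc, toCycles_i]
  exact hx₁

lemma lift_of_chainInj {I : CochainComplex (ModuleCat.{u} R) ℤ}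
    (hI : IsInjTotallyAcyclic I) (n : ℕ) :
    ∀ (L : ModuleCat.{u} R), ChainInj n L → ∀ (j k : ℤ) (hjk : j + 1 = k)
      (f : L ⟶ I.cycles k), ∃ w : L ⟶ I.X j, w ≫ I.toCycles j k = f := by
  induction n with
  | zero => exact fun L hL => lift_of_injective hI hL
  | succ n ih =>
    intro L hL j k hjk f
    obtain ⟨S, hex, hmono, hepi, ⟨e⟩, hinj2, hchain⟩ := hL
    subst hjk
    -- reduce to the case `L = S.X₁`
    suffices h : ∀ f' : S.X₁ ⟶ I.cycles (j+1),
        ∃ w : S.X₁ ⟶ I.X j, w ≫ I.toCycles j (j+1) = f' by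
      obtain ⟨w, hw⟩ := h (e.inv ≫ f)
      exact ⟨e.hom ≫ w, by rw [Category.assoc, hw, Iso.hom_inv_id_assoc]⟩
    intro f'
    have hmono' : Mono S.f := hmono
    have hepi' : Epi S.g := hepi
    have hinj' : Injective S.X₂ := hinj2
    haveI : Injective (I.X (j+1)) := hI.1 (j+1)
    -- extend `f' ≫ iCycles` to `S.X₂`
    set h : S.X₂ ⟶ I.X (j+1) := Injective.factorThru (f' ≫ I.iCycles (j+1)) S.f with hh
    have hfac : S.f ≫ h = f' ≫ I.iCycles (j+1) := Injective.comp_factorThru _ _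
    -- `h ≫ d` kills `S.X₁`, so factors through `S.X₃`
    have hker : S.f ≫ (h ≫ I.d (j+1) (j+1+1)) = 0 := by
      rw [← Category.assoc, hfac, Category.assoc, iCycles_d, comp_zero]
    obtain ⟨u', hu'⟩ := CokernelCofork.IsColimit.desc' hex.gIsCokernel
      (h ≫ I.d (j+1) (j+1+1)) hker
    have hu'' : S.g ≫ u' = h ≫ I.d (j+1) (j+1+1) := hu'
    have hu'd : u' ≫ I.d (j+1+1) (j+1+1+1) = 0 := by
      rw [← cancel_epi S.g, ← Category.assoc, hu'', Category.assoc, I.d_comp_d,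
        comp_zero, comp_zero]
    set u : S.X₃ ⟶ I.cycles (j+1+1) := I.liftCycles u' (j+1+1+1) (by simp) hu'd with hu
    obtain ⟨v, hv⟩ := ih S.X₃ hchain (j+1) (j+1+1) rfl u
    -- correct `h` to land in cycles
    have hvd : v ≫ I.d (j+1) (j+1+1) = u' := by
      calc v ≫ I.d (j+1) (j+1+1)
          = (v ≫ I.toCycles (j+1) (j+1+1)) ≫ I.iCycles (j+1+1) := by
            rw [Category.assoc, toCycles_i]
        _ = u ≫ I.iCycles (j+1+1) := by rw [hv]
        _ = u' := by simp [hu]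
    have hd : (h - S.g ≫ v) ≫ I.d (j+1) (j+1+1) = 0 := by
      rw [Preadditive.sub_comp, Category.assoc, hvd, ← hu'', sub_self]
    set h'' : S.X₂ ⟶ I.cycles (j+1) :=
      I.liftCycles (h - S.g ≫ v) (j+1+1) (by simp) hd with hh''
    have hfh : S.f ≫ h'' = f' := by
      rw [← cancel_mono (I.iCycles (j+1)), Category.assoc]
      have : h'' ≫ I.iCycles (j+1) = h - S.g ≫ v := by simp [hh'']
      rw [this, Preadditive.comp_sub, hfac, ← Category.assoc, S.zero, zero_comp, sub_zero]
    obtain ⟨w', hw'⟩ := lift_of_injective hI hinj' j (j+1) rfl h''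
    exact ⟨S.f ≫ w', by rw [Category.assoc, hw', hfh]⟩

end Aux

/-- A Gorenstein injective module of finite injective dimension is injective. -/
theorem injective_of_gorensteinInjective_of_finite_injective_dimension
    (M : ModuleCat.{u} R) (h1 : IsGorensteinInjective M) (h2 : ∃ n, HasInjDimLE M n) :
    Injective M := by
  obtain ⟨I, hI, ⟨e⟩⟩ := h1
  obtain ⟨n, hd⟩ := h2
  obtain ⟨w, hw⟩ := lift_of_chainInj hI n M (chainInj_of_hasInjDimLE hd) (-1) 0 (by ring) e.hom
  have hinj : Injective (I.X (-1)) := hI.1 (-1)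
  constructor
  intro X Y g f hf
  refine ⟨Injective.factorThru (g ≫ w) f ≫ I.toCycles (-1) 0 ≫ e.inv, ?_⟩
  rw [← Category.assoc, Injective.comp_factorThru, Category.assoc,
    show w ≫ I.toCycles (-1) 0 ≫ e.inv = 𝟙 M from by
      rw [← Category.assoc, hw, Iso.hom_inv_id],
    Category.comp_id]
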